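/- arXiv:1111.4419 — 2 statements merged into one kernel-verified Lean document; each statement's English description precedes it below -/
import Mathlib

section
/- Assume 1-H < Hd < 1, let κ > 0, β > 0 with 1-Hd < Hβ < min(H, 2-2Hd). Then there is a constant c independent of n and K such that for all n ∈ ℕ, s > 0, 0 < K < ns/2, y ∈ ℝ^d: n^{-Hd} ∫_K^{ns/2} (s - u/n)^{-Hd} [∫_{ℝ^d} e^{-κ|ξ|²(u/n)^{2H}} |1 - e^{i ξ·y / n^H}| dξ] du ≤ c s^{-Hd} K^{1-Hd-Hβ} |y|^β. -/
open MeasureTheory Set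
noncomputable section

private lemma osc_bound {β : ℝ} (hβ0 : 0 < β) (hβ1 : β ≤ 1) (θ : ℝ) :
    ‖1 - Complex.exp (Complex.I * θ)‖ ≤ 2 * |θ| ^ β := by
  rcases le_or_gt |θ| 1 with h | h
  · rcases eq_or_ne θ 0 with rfl | hθ
    · simp
      positivity
    · have habs : ‖Complex.I * θ‖ = |θ| := by simp
      have h1 : ‖1 - Complex.exp (Complex.I * θ)‖ ≤ 2 * |θ| := by
        have h2 := Complex.norm_exp_sub_one_le (x := Complex.I * θ) (by rw [habs]; exact h)
        rw [habs] at h2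
        calc ‖1 - Complex.exp (Complex.I * θ)‖
            = ‖Complex.exp (Complex.I * θ) - 1‖ := by
              rw [norm_sub_rev]
          _ ≤ 2 * |θ| := h2
      refine h1.trans ?_
      have h3 : |θ| ≤ |θ| ^ β := by
        nth_rewrite 1 [← Real.rpow_one |θ|]
        exact Real.rpow_le_rpow_of_exponent_ge (abs_pos.2 hθ) h hβ1
      linarith
  · have h2 : ‖1 - Complex.exp (Complex.I * θ)‖ ≤ 2 := by
      calc ‖1 - Complex.exp (Complex.I * θ)‖
          ≤ ‖(1:ℂ)‖ + ‖Complex.exp (Complex.I * θ)‖ := norm_sub_le _ _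
        _ = 2 := by
            simp [Complex.norm_exp, ← Complex.ofReal_pow]
            norm_num
    refine h2.trans ?_
    have h3 : (1:ℝ) ≤ |θ| ^ β := by
      calc (1:ℝ) = 1 ^ β := (Real.one_rpow β).symm
        _ ≤ |θ| ^ β := Real.rpow_le_rpow zero_le_one h.le hβ0.le
    nlinarith

private lemma gauss_int {d : ℕ} {β b : ℝ} (hβ0 : 0 < β) (hβ1 : β ≤ 1) (hb : 0 < b) :
    Integrable (fun ξ : EuclideanSpace ℝ (Fin d) => ‖ξ‖ ^ β * Real.exp (-b * ‖ξ‖ ^ 2)) := by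
  have hb2 : 0 < b / 2 := half_pos hb
  have hI : Integrable (fun ξ : EuclideanSpace ℝ (Fin d) => Real.exp (-(b/2) * ‖ξ‖ ^ 2)) := by
    have h := (GaussianFourier.integrable_cexp_neg_mul_sq_norm_add
      (b := ((b/2 : ℝ) : ℂ)) (by simpa using hb2) 0
      (0 : EuclideanSpace ℝ (Fin d))).norm
    refine h.congr (Filter.Eventually.of_forall fun v => ?_)
    simp [Complex.norm_exp, ← Complex.ofReal_pow]
  set M : ℝ := 2 / min 1 (b/2) with hM
  have hm0 : 0 < min 1 (b/2) := lt_min one_pos hb2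
  have hM0 : 0 < M := by positivity
  refine (hI.const_mul M).mono' ?_ (Filter.Eventually.of_forall fun ξ => ?_)
  · apply Continuous.aestronglyMeasurable
    have h1 : Continuous fun ξ : EuclideanSpace ℝ (Fin d) => ‖ξ‖ ^ β :=
      continuous_norm.rpow_const fun x => Or.inr hβ0.le
    exact h1.mul (Real.continuous_exp.comp (by continuity))
  · set t := ‖ξ‖ with ht
    have ht0 : 0 ≤ t := norm_nonneg _
    rw [Real.norm_eq_abs, abs_of_nonneg (by positivity)]
    have h1 : t ^ β ≤ 1 + t := by
      rcases le_total t 1 with h | h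
      · have := Real.rpow_le_one ht0 h hβ0.le
        linarith
      · have : t ^ β ≤ t ^ (1:ℝ) := Real.rpow_le_rpow_of_exponent_le h hβ1
        rw [Real.rpow_one] at this
        linarith
    have h2 : Real.exp (-b * t ^ 2) =
        Real.exp (-(b/2) * t ^ 2) * Real.exp (-(b/2) * t ^ 2) := by
      rw [← Real.exp_add]; ring_nf
    have h3 : Real.exp (-(b/2) * t ^ 2) ≤ (1 + (b/2) * t ^ 2)⁻¹ := by
      rw [show -(b/2) * t ^ 2 = -((b/2) * t^2) by ring, Real.exp_neg]
      have hx : (0:ℝ) < 1 + (b/2) * t ^ 2 := by positivity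
      apply inv_anti₀ hx
      have := Real.add_one_le_exp ((b/2) * t ^ 2)
      linarith
    have h4 : (1 + t) * (1 + (b/2) * t ^ 2)⁻¹ ≤ M := by
      have hx : (0:ℝ) < 1 + (b/2) * t ^ 2 := by positivity
      have key : (1 + t) * min 1 (b/2) ≤ 2 * (1 + (b/2) * t ^ 2) := by
        rcases le_total b 2 with hble | hbge
        · rw [min_eq_right (by linarith)]
          nlinarith [mul_nonneg hb.le (sq_nonneg (t - 1/4))]
        · rw [min_eq_left (by linarith)]
          nlinarith [sq_nonneg (2*t - 1), mul_nonneg (by linarith : (0:ℝ) ≤ b - 2) (sq_nonneg t)]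
      rw [← div_eq_mul_inv, hM, div_le_div_iff₀ hx hm0]
      linarith
    calc t ^ β * Real.exp (-b * t ^ 2)
        = (t ^ β * Real.exp (-(b/2) * t ^ 2)) * Real.exp (-(b/2) * t ^ 2) := by
          rw [h2]; ring
      _ ≤ M * Real.exp (-(b/2) * t ^ 2) := by
          apply mul_le_mul_of_nonneg_right _ (Real.exp_pos _).le
          calc t ^ β * Real.exp (-(b/2) * t ^ 2)
              ≤ (1 + t) * (1 + (b/2) * t ^ 2)⁻¹ :=
                mul_le_mul h1 h3 (Real.exp_pos _).le (by linarith)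
            _ ≤ M := h4

private lemma inner_step {d : ℕ} {κ β H : ℝ} (hκ : 0 < κ) (hβ0 : 0 < β) (hβ1 : β ≤ 1)
    (y : EuclideanSpace ℝ (Fin d)) {N : ℝ} (hN : 0 < N) {u : ℝ} (hu : 0 < u) :
    (∫ ξ : EuclideanSpace ℝ (Fin d),
        Real.exp (-κ * ‖ξ‖ ^ 2 * (u / N) ^ (2 * H)) *
          ‖1 - Complex.exp (Complex.I * ((inner ℝ ξ y / N ^ H : ℝ) : ℂ))‖)
      ≤ 2 * ‖y‖ ^ β / N ^ (H * β) * (u / N) ^ (-(H * (d + β))) *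
        ∫ ξ : EuclideanSpace ℝ (Fin d), ‖ξ‖ ^ β * Real.exp (-κ * ‖ξ‖ ^ 2) := by
  have hq : 0 < u / N := div_pos hu hN
  set r : ℝ := (u / N) ^ H with hrdef
  have hr : 0 < r := Real.rpow_pos_of_pos hq H
  have hNH : (0:ℝ) < N ^ H := Real.rpow_pos_of_pos hN H
  set C : ℝ := ∫ ξ : EuclideanSpace ℝ (Fin d), ‖ξ‖ ^ β * Real.exp (-κ * ‖ξ‖ ^ 2) with hCdef
  have hC0 : 0 ≤ C := integral_nonneg fun ξ => by positivity
  have hr2 : r ^ 2 = (u / N) ^ (2 * H) := by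
    rw [hrdef, ← Real.rpow_natCast ((u/N) ^ H) 2, ← Real.rpow_mul hq.le]
    norm_num [mul_comm]
  -- pointwise bound
  have hpt : ∀ ξ : EuclideanSpace ℝ (Fin d),
      Real.exp (-κ * ‖ξ‖ ^ 2 * (u / N) ^ (2 * H)) *
          ‖1 - Complex.exp (Complex.I * ((inner ℝ ξ y / N ^ H : ℝ) : ℂ))‖
        ≤ 2 * ‖y‖ ^ β / N ^ (H * β) *
            (‖ξ‖ ^ β * Real.exp (-κ * ‖ξ‖ ^ 2 * (u / N) ^ (2 * H))) := by
    intro ξ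
    set θ : ℝ := inner ℝ ξ y / N ^ H with hθdef
    have h1 : ‖1 - Complex.exp (Complex.I * (θ : ℂ))‖ ≤ 2 * |θ| ^ β := osc_bound hβ0 hβ1 θ
    have h2 : |θ| ^ β ≤ ‖ξ‖ ^ β * ‖y‖ ^ β / N ^ (H * β) := by
      have hθle : |θ| ≤ ‖ξ‖ * ‖y‖ / N ^ H := by
        rw [hθdef, abs_div, abs_of_pos hNH]
        exact (div_le_div_iff_of_pos_right hNH).2 (abs_real_inner_le_norm ξ y)
      calc |θ| ^ β ≤ (‖ξ‖ * ‖y‖ / N ^ H) ^ β :=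
            Real.rpow_le_rpow (abs_nonneg θ) hθle hβ0.le
        _ = ‖ξ‖ ^ β * ‖y‖ ^ β / N ^ (H * β) := by
            rw [Real.div_rpow (by positivity) hNH.le,
              Real.mul_rpow (norm_nonneg _) (norm_nonneg _), Real.rpow_mul hN.le]
    calc Real.exp (-κ * ‖ξ‖ ^ 2 * (u / N) ^ (2 * H)) *
          ‖1 - Complex.exp (Complex.I * (θ : ℂ))‖
        ≤ Real.exp (-κ * ‖ξ‖ ^ 2 * (u / N) ^ (2 * H)) * (2 * |θ| ^ β) :=
          mul_le_mul_of_nonneg_left h1 (Real.exp_pos _).le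
      _ ≤ Real.exp (-κ * ‖ξ‖ ^ 2 * (u / N) ^ (2 * H)) *
            (2 * (‖ξ‖ ^ β * ‖y‖ ^ β / N ^ (H * β))) := by
          apply mul_le_mul_of_nonneg_left _ (Real.exp_pos _).le
          linarith
      _ = 2 * ‖y‖ ^ β / N ^ (H * β) *
            (‖ξ‖ ^ β * Real.exp (-κ * ‖ξ‖ ^ 2 * (u / N) ^ (2 * H))) := by ring
  -- integrability of the majorant
  have hbpos : 0 < κ * (u/N) ^ (2*H) := by positivity
  have hmaj : Integrable (fun ξ : EuclideanSpace ℝ (Fin d) =>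
      2 * ‖y‖ ^ β / N ^ (H * β) *
        (‖ξ‖ ^ β * Real.exp (-κ * ‖ξ‖ ^ 2 * (u / N) ^ (2 * H)))) := by
    have h := (gauss_int (d := d) hβ0 hβ1 hbpos).const_mul (2 * ‖y‖ ^ β / N ^ (H * β))
    refine h.congr (Filter.Eventually.of_forall fun ξ => ?_)
    dsimp only
    rw [show -(κ * (u/N) ^ (2*H)) * ‖ξ‖ ^ 2 = -κ * ‖ξ‖ ^ 2 * (u/N) ^ (2*H) by ring]
  -- compare
  have hIle := integral_mono_of_nonneg
    (f := fun ξ : EuclideanSpace ℝ (Fin d) =>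
      Real.exp (-κ * ‖ξ‖ ^ 2 * (u / N) ^ (2 * H)) *
        ‖1 - Complex.exp (Complex.I * ((inner ℝ ξ y / N ^ H : ℝ) : ℂ))‖)
    (Filter.Eventually.of_forall fun ξ => by positivity) hmaj
    (Filter.Eventually.of_forall hpt)
  refine hIle.trans ?_
  -- compute the majorant integral
  have e1 : (fun ξ : EuclideanSpace ℝ (Fin d) =>
        ‖ξ‖ ^ β * Real.exp (-κ * ‖ξ‖ ^ 2 * (u / N) ^ (2 * H)))
      = fun ξ => (r ^ β)⁻¹ * (‖r • ξ‖ ^ β * Real.exp (-κ * ‖r • ξ‖ ^ 2)) := by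
    funext ξ
    have hnorm : ‖r • ξ‖ = r * ‖ξ‖ := by
      rw [norm_smul, Real.norm_eq_abs, abs_of_pos hr]
    have hx : (0:ℝ) < r ^ β := Real.rpow_pos_of_pos hr β
    rw [hnorm, Real.mul_rpow hr.le (norm_nonneg _),
      show -κ * (r * ‖ξ‖) ^ 2 = -κ * ‖ξ‖ ^ 2 * r ^ 2 by ring, hr2]
    field_simp
  have hcs := Measure.integral_comp_smul
    (volume : Measure (EuclideanSpace ℝ (Fin d)))
    (fun ζ : EuclideanSpace ℝ (Fin d) => ‖ζ‖ ^ β * Real.exp (-κ * ‖ζ‖ ^ 2)) r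
  simp only [finrank_euclideanSpace_fin, smul_eq_mul] at hcs
  have heq : (∫ ξ : EuclideanSpace ℝ (Fin d),
      2 * ‖y‖ ^ β / N ^ (H * β) *
        (‖ξ‖ ^ β * Real.exp (-κ * ‖ξ‖ ^ 2 * (u / N) ^ (2 * H))))
      = 2 * ‖y‖ ^ β / N ^ (H * β) * ((r ^ β)⁻¹ * (|((r ^ d : ℝ))⁻¹| * C)) := by
    rw [integral_const_mul, e1, integral_const_mul, hcs]
  rw [heq]
  -- final algebra
  have habs : |((r ^ d : ℝ))⁻¹| = (r ^ d)⁻¹ := abs_of_pos (by positivity)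
  have hrd : ((r : ℝ) ^ d)⁻¹ = (u/N) ^ (-(H * d)) := by
    rw [← Real.rpow_natCast r d, hrdef, ← Real.rpow_mul hq.le, ← Real.rpow_neg hq.le]
  have hrβ : ((r : ℝ) ^ β)⁻¹ = (u/N) ^ (-(H * β)) := by
    rw [hrdef, ← Real.rpow_mul hq.le, ← Real.rpow_neg hq.le]
  have hsum : (u/N) ^ (-(H * β)) * (u/N) ^ (-(H * d)) = (u/N) ^ (-(H * (d + β))) := by
    rw [← Real.rpow_add hq]
    ring_nf
  rw [habs, hrd, hrβ]
  have hfin : 2 * ‖y‖ ^ β / N ^ (H * β) * ((u/N) ^ (-(H * β)) * ((u/N) ^ (-(H * (d:ℝ))) * C))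
      = 2 * ‖y‖ ^ β / N ^ (H * β) * (u/N) ^ (-(H * ((d:ℝ) + β))) * C := by
    rw [← hsum]; ring
  rw [hfin]

set_option maxHeartbeats 1000000 in
theorem stmt_7 (d : ℕ) (hd : 1 ≤ d) (H : ℝ) (hH0 : 0 < H) (hH1 : H < 1)
    (hHd1 : 1 - H < H * d) (hHd2 : H * d < 1)
    (κ : ℝ) (hκ : 0 < κ)
    (β : ℝ) (hβ0 : 0 < β) (hβ1 : 1 - H * d < H * β)
    (hβ2 : H * β < min H (2 - 2 * (H * d))) :
    ∃ c : ℝ, ∀ (n : ℕ), 1 ≤ n → ∀ s : ℝ, 0 < s → ∀ K : ℝ, 0 < K → K < n * s / 2 →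
      ∀ y : EuclideanSpace ℝ (Fin d),
      (n:ℝ) ^ (-(H * d)) *
        (∫ u in Ioo K ((n:ℝ) * s / 2), (s - u / n) ^ (-(H * d)) *
          ∫ ξ : EuclideanSpace ℝ (Fin d),
            Real.exp (-κ * ‖ξ‖ ^ 2 * (u / n) ^ (2 * H)) *
              ‖1 - Complex.exp (Complex.I * ((inner ℝ ξ y / (n:ℝ) ^ H : ℝ) : ℂ))‖)
      ≤ c * s ^ (-(H * d)) * K ^ (1 - H * d - H * β) * ‖y‖ ^ β := by
  have hβle1 : β ≤ 1 := by
    have h := lt_of_lt_of_le hβ2 (min_le_left _ _)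
    nlinarith
  set C : ℝ := ∫ ξ : EuclideanSpace ℝ (Fin d), ‖ξ‖ ^ β * Real.exp (-κ * ‖ξ‖ ^ 2) with hCdef
  have hC0 : 0 ≤ C := integral_nonneg fun ξ => by positivity
  have hd1 : (1:ℝ) ≤ (d:ℝ) := by exact_mod_cast hd
  have hHd0 : 0 < H * (d:ℝ) := by nlinarith
  set p : ℝ := H * (d:ℝ) + H * β with hpdef
  have hp1 : 1 < p := by rw [hpdef]; linarith
  have hp1' : p - 1 ≠ 0 := by linarith
  refine ⟨2 ^ (H * (d:ℝ)) * 2 * C / (p - 1), ?_⟩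
  intro n hn s hs K hK hKs y
  have hN1 : (1:ℝ) ≤ (n:ℝ) := by exact_mod_cast hn
  have hN0 : (0:ℝ) < (n:ℝ) := lt_of_lt_of_le one_pos hN1
  have hy : 0 ≤ ‖y‖ ^ β := Real.rpow_nonneg (norm_nonneg _) β
  set B : ℝ := (s/2) ^ (-(H * (d:ℝ))) * (2 * ‖y‖ ^ β) * C * (n:ℝ) ^ (H * (d:ℝ)) with hBdef
  have hB0 : 0 ≤ B := by
    rw [hBdef]
    exact mul_nonneg (mul_nonneg (mul_nonneg
      (Real.rpow_nonneg (le_of_lt (half_pos hs)) _)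
      (by linarith)) hC0) (Real.rpow_nonneg hN0.le _)
  have hnHβ : ((n:ℝ)) ^ (H * β) ≠ 0 := (Real.rpow_pos_of_pos hN0 _).ne'
  have houter : (∫ u in Ioo K ((n:ℝ) * s / 2), (s - u / n) ^ (-(H * d)) *
      ∫ ξ : EuclideanSpace ℝ (Fin d),
        Real.exp (-κ * ‖ξ‖ ^ 2 * (u / n) ^ (2 * H)) *
          ‖1 - Complex.exp (Complex.I * ((inner ℝ ξ y / (n:ℝ) ^ H : ℝ) : ℂ))‖)
      ≤ ∫ u in Ioo K ((n:ℝ) * s / 2), B * u ^ (-p) := by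
    apply integral_mono_of_nonneg
    · filter_upwards [ae_restrict_mem measurableSet_Ioo] with u hu
      have h2 : 0 ≤ s - u / (n:ℝ) := by
        have : u / (n:ℝ) < s / 2 := by
          rw [div_lt_div_iff₀ hN0 two_pos]
          nlinarith [hu.2]
        linarith
      exact mul_nonneg (Real.rpow_nonneg h2 _) (integral_nonneg fun ξ => by positivity)
    · exact ((integrableOn_Ioi_rpow_of_lt (by linarith : -p < -1) hK).mono_set
        Ioo_subset_Ioi_self).const_mul B
    · filter_upwards [ae_restrict_mem measurableSet_Ioo] with u hu
      have hu0 : 0 < u := hK.trans hu.1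
      have hun : u / (n:ℝ) < s / 2 := by
        rw [div_lt_div_iff₀ hN0 two_pos]
        nlinarith [hu.2]
      have hsub : s/2 ≤ s - u / (n:ℝ) := by linarith
      have hpow1 : (s - u / (n:ℝ)) ^ (-(H * (d:ℝ))) ≤ (s/2) ^ (-(H * (d:ℝ))) :=
        Real.rpow_le_rpow_of_nonpos (half_pos hs) hsub (by linarith : -(H * (d:ℝ)) ≤ 0)
      have hinner := inner_step (H := H) hκ hβ0 hβle1 y hN0 hu0
      have hinner0 : 0 ≤ ∫ ξ : EuclideanSpace ℝ (Fin d),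
          Real.exp (-κ * ‖ξ‖ ^ 2 * (u / (n:ℝ)) ^ (2 * H)) *
            ‖1 - Complex.exp (Complex.I * ((inner ℝ ξ y / (n:ℝ) ^ H : ℝ) : ℂ))‖ :=
        integral_nonneg fun ξ => by positivity
      have hq : 0 < u / (n:ℝ) := div_pos hu0 hN0
      calc (s - u / (n:ℝ)) ^ (-(H * (d:ℝ))) *
            ∫ ξ : EuclideanSpace ℝ (Fin d),
              Real.exp (-κ * ‖ξ‖ ^ 2 * (u / (n:ℝ)) ^ (2 * H)) *
                ‖1 - Complex.exp (Complex.I * ((inner ℝ ξ y / (n:ℝ) ^ H : ℝ) : ℂ))‖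
          ≤ (s/2) ^ (-(H * (d:ℝ))) *
            (2 * ‖y‖ ^ β / (n:ℝ) ^ (H * β) * (u / (n:ℝ)) ^ (-(H * ((d:ℝ) + β))) * C) := by
            apply mul_le_mul hpow1 hinner hinner0
              (Real.rpow_nonneg (le_of_lt (half_pos hs)) _)
        _ = B * u ^ (-p) := by
            have e0 : -(H * ((d:ℝ) + β)) = -p := by rw [hpdef]; ring
            have e1 : (u / (n:ℝ)) ^ (-p) = u ^ (-p) * (n:ℝ) ^ p := by
              rw [Real.div_rpow hu0.le hN0.le, Real.rpow_neg hN0.le, div_eq_mul_inv, inv_inv]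
            have e2 : ((n:ℝ)) ^ p = (n:ℝ) ^ (H * (d:ℝ)) * (n:ℝ) ^ (H * β) := by
              rw [hpdef, Real.rpow_add hN0]
            rw [e0, e1, e2, hBdef]
            field_simp
  have hconst : (∫ u in Ioo K ((n:ℝ)*s/2), B * u ^ (-p))
      = B * ∫ u in Ioo K ((n:ℝ)*s/2), u ^ (-p) := integral_const_mul _ _
  have hmono2 : (∫ u in Ioo K ((n:ℝ)*s/2), u ^ (-p)) ≤ ∫ u in Ioi K, u ^ (-p) := by
    apply setIntegral_mono_set (integrableOn_Ioi_rpow_of_lt (by linarith : -p < -1) hK)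
    · filter_upwards [ae_restrict_mem measurableSet_Ioi] with u hu
      exact Real.rpow_nonneg (le_of_lt (hK.trans hu)) _
    · exact HasSubset.Subset.eventuallyLE Ioo_subset_Ioi_self
  have hIval : (∫ u in Ioi K, u ^ (-p)) = K ^ (1-p) / (p-1) := by
    rw [integral_Ioi_rpow_of_lt (by linarith : -p < -1) hK,
      show (-p+1:ℝ) = 1-p from by ring,
      div_eq_div_iff (by linarith : (1-p:ℝ) ≠ 0) hp1']
    ring
  have hchain : (∫ u in Ioo K ((n:ℝ) * s / 2), (s - u / n) ^ (-(H * d)) *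
      ∫ ξ : EuclideanSpace ℝ (Fin d),
        Real.exp (-κ * ‖ξ‖ ^ 2 * (u / n) ^ (2 * H)) *
          ‖1 - Complex.exp (Complex.I * ((inner ℝ ξ y / (n:ℝ) ^ H : ℝ) : ℂ))‖)
      ≤ B * (K ^ (1-p) / (p-1)) := by
    refine houter.trans ?_
    rw [hconst]
    exact mul_le_mul_of_nonneg_left (hmono2.trans_eq hIval) hB0
  refine le_trans (mul_le_mul_of_nonneg_left hchain
    (Real.rpow_nonneg hN0.le _)) (le_of_eq ?_)
  have hnn : (n:ℝ) ^ (-(H * (d:ℝ))) * (n:ℝ) ^ (H * (d:ℝ)) = 1 := by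
    rw [← Real.rpow_add hN0]; simp
  have hs2 : ((s/2:ℝ)) ^ (-(H * (d:ℝ))) = s ^ (-(H * (d:ℝ))) * 2 ^ (H * (d:ℝ)) := by
    rw [Real.div_rpow hs.le (by norm_num : (0:ℝ) ≤ 2),
      Real.rpow_neg (by norm_num : (0:ℝ) ≤ 2), div_eq_mul_inv, inv_inv]
  have hKe : (1 - p : ℝ) = 1 - H * (d:ℝ) - H * β := by rw [hpdef]; ring
  have hsplit : (n:ℝ) ^ (-(H * (d:ℝ))) * (B * (K ^ (1-p) / (p-1)))
      = ((n:ℝ) ^ (-(H * (d:ℝ))) * (n:ℝ) ^ (H * (d:ℝ))) *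
        ((s/2) ^ (-(H * (d:ℝ))) * (2 * ‖y‖ ^ β) * C * (K ^ (1-p) / (p-1))) := by
    rw [hBdef]; ring
  rw [hsplit, hnn, one_mul, hs2, hKe]
  field_simp
end
end

section
/- Let B be a d-dimensional fractional Brownian motion with Hurst index H ∈ (0,1) satisfying the local nondeterminism property: Var(∑_{i=1}^k u_i · (B(s_i) - B(s_{i-1}))) ≥ k_H ∑_{i=1}^k |u_i|² (s_i - s_{i-1})^{2H} for all 0 = s₀ < s₁ < ⋯ < s_k and u_i ∈ ℝ^d. Then the covariance matrix A_k(s) of the Gaussian vector (B(s₁), …, B(s_k)) satisfies det(A_k(s))^{-1/2} ≤ c^k ∏_{i=1}^k (s_i - s_{i-1})^{-Hd} for a constant c depending only on H and d. -/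
open MeasureTheory Set
open scoped Matrix
noncomputable section

open scoped MatrixOrder in
lemma my_det_mono {n : Type*} [Fintype n] [DecidableEq n] {M N : Matrix n n ℝ}
    (hN : N.PosDef) (h : (M - N).PosSemidef) : N.det ≤ M.det := by
  set Q := CFC.sqrt N with hQdef
  have hQps : Q.PosSemidef := Matrix.nonneg_iff_posSemidef.mp (CFC.sqrt_nonneg N)
  have hQ2 : Q * Q = N := CFC.sqrt_mul_sqrt_self N (Matrix.nonneg_iff_posSemidef.mpr hN.posSemidef)
  have hdetQ : Q.det * Q.det = N.det := by rw [← Matrix.det_mul, hQ2]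
  have hQdet0 : Q.det ≠ 0 := by
    intro h0
    rw [h0, mul_zero] at hdetQ
    exact hN.det_pos.ne' hdetQ.symm
  have hQu : IsUnit Q.det := isUnit_iff_ne_zero.mpr hQdet0
  set Qi := Q⁻¹ with hQidef
  have hQiQ : Qi * Q = 1 := Matrix.nonsing_inv_mul Q hQu
  have hQQi : Q * Qi = 1 := Matrix.mul_nonsing_inv Q hQu
  have hQih : Qiᴴ = Qi := by
    rw [hQidef, Matrix.conjTranspose_nonsing_inv, hQps.1]
  set P := Qi * M * Qi with hPdef
  have hQNQ : Qi * N * Qi = 1 := by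
    rw [← hQ2]
    calc Qi * (Q * Q) * Qi = (Qi * Q) * (Q * Qi) := by noncomm_ring
    _ = 1 := by rw [hQiQ, hQQi, one_mul]
  have hP1 : (P - 1).PosSemidef := by
    have h2 := h.mul_mul_conjTranspose_same Qi
    rw [hQih] at h2
    have heq : Qi * (M - N) * Qi = P - 1 := by
      rw [Matrix.mul_sub, Matrix.sub_mul, hQNQ, hPdef]
    rwa [heq] at h2
  have hPh : P.IsHermitian := by
    have h1 : P = (P - 1) + 1 := by abel
    rw [h1]; exact hP1.1.add Matrix.isHermitian_one
  have heig : ∀ i, 1 ≤ hPh.eigenvalues i := by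
    intro i
    have hv := hPh.mulVec_eigenvectorBasis i
    set v : n → ℝ := ⇑(hPh.eigenvectorBasis i) with hvdef
    have hq := hP1.dotProduct_mulVec_nonneg v
    have hsv : star v = v := by funext j; simp
    have hn : ‖hPh.eigenvectorBasis i‖ = 1 := hPh.eigenvectorBasis.orthonormal.1 i
    have h3 : (inner ℝ (hPh.eigenvectorBasis i) (hPh.eigenvectorBasis i) : ℝ) = 1 := by
      rw [real_inner_self_eq_norm_sq, hn, one_pow]
    rw [PiLp.inner_apply] at h3
    simp only [RCLike.inner_apply, starRingEnd_apply, star_trivial] at h3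
    have hvv : dotProduct v v = 1 := h3
    rw [Matrix.sub_mulVec, Matrix.one_mulVec, hsv] at hq
    rw [show (P *ᵥ v) = hPh.eigenvalues i • v from hv] at hq
    rw [dotProduct_sub, dotProduct_smul, smul_eq_mul, hvv] at hq
    linarith
  have hdetP : 1 ≤ P.det := by
    rw [hPh.det_eq_prod_eigenvalues]
    have h4 : (1:ℝ) ≤ ∏ i, hPh.eigenvalues i := by
      have h5 := Finset.prod_le_prod (s := Finset.univ) (f := fun _ : n => (1:ℝ))
        (g := hPh.eigenvalues) (fun i _ => zero_le_one) (fun i _ => heig i)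
      simpa using h5
    exact_mod_cast h4
  have hMQPQ : Q * P * Q = M := by
    rw [hPdef]
    calc Q * (Qi * M * Qi) * Q = (Q * Qi) * M * (Qi * Q) := by noncomm_ring
    _ = M := by rw [hQQi, hQiQ, one_mul, Matrix.mul_one]
  have hMdet : M.det = N.det * P.det := by
    rw [← hMQPQ, Matrix.det_mul, Matrix.det_mul, ← hdetQ]; ring
  calc N.det = N.det * 1 := (mul_one _).symm
  _ ≤ N.det * P.det := by
      have := hN.det_pos
      nlinarith
  _ = M.det := hMdet.symm

lemma my_posdef_conj {n : Type*} [Fintype n] [DecidableEq n] {D : Matrix n n ℝ}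
    (hD : D.PosDef) (U : Matrix n n ℝ) (hU : IsUnit U.det) : (Uᵀ * D * U).PosDef := by
  have hUT : Uᴴ = Uᵀ := by ext i j; simp [Matrix.conjTranspose_apply]
  refine Matrix.PosDef.of_dotProduct_mulVec_pos ?_ ?_
  · rw [← hUT]
    exact Matrix.isHermitian_conjTranspose_mul_mul U hD.1
  · intro x hx
    have hUx : U *ᵥ x ≠ 0 := by
      intro h0
      have h1 : x = (U⁻¹ * U) *ᵥ x := by
        rw [Matrix.nonsing_inv_mul U hU, Matrix.one_mulVec]
      rw [← Matrix.mulVec_mulVec, h0, Matrix.mulVec_zero] at h1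
      exact hx h1
    have hstar : ∀ y : n → ℝ, star y = y := fun y => funext fun i => by simp
    have key : dotProduct (star x) ((Uᵀ * D * U) *ᵥ x)
        = dotProduct (star (U *ᵥ x)) (D *ᵥ (U *ᵥ x)) := by
      rw [hstar, hstar, ← Matrix.mulVec_mulVec, ← Matrix.mulVec_mulVec,
        Matrix.dotProduct_mulVec, Matrix.vecMul_transpose]
    rw [key]
    exact hD.dotProduct_mulVec_pos hUx

private def prevv {k : ℕ} (s : Fin k → ℝ) (i : Fin k) : ℝ :=
  if h : (i : ℕ) = 0 then 0 else s ⟨(i : ℕ) - 1, lt_of_le_of_lt (Nat.sub_le _ _) i.isLt⟩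

theorem stmt_14 (d : ℕ) (hd : 1 ≤ d) (H : ℝ) (hH0 : 0 < H) (hH1 : H < 1)
    (kH : ℝ) (hkH : 0 < kH)
    (R : ℝ → ℝ → ℝ)
    (hR : ∀ u v : ℝ, R u v = (u ^ (2 * H) + v ^ (2 * H) - |u - v| ^ (2 * H)) / 2)
    -- local nondeterminism property of the fBm, expressed through the covariance R
    (hLND : ∀ (k : ℕ) (s : Fin k → ℝ), StrictMono s → (∀ i, 0 < s i) →
      ∀ ξ : Fin k → EuclideanSpace ℝ (Fin d),
        kH * ∑ i, ‖∑ j ∈ Finset.univ.filter (fun j => i ≤ j), ξ j‖ ^ 2 *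
            (s i - (if h : (i : ℕ) = 0 then 0
              else s ⟨(i : ℕ) - 1, lt_of_le_of_lt (Nat.sub_le _ _) i.isLt⟩)) ^ (2 * H)
          ≤ ∑ i, ∑ j, (inner ℝ (ξ i) (ξ j) : ℝ) * R (s i) (s j)) :
    ∃ c : ℝ, 0 < c ∧ ∀ (k : ℕ) (s : Fin k → ℝ), StrictMono s → (∀ i, 0 < s i) →
      (Matrix.det (Matrix.of fun p q : Fin k × Fin d =>
          if p.2 = q.2 then R (s p.1) (s q.1) else 0)) ^ (-(1:ℝ) / 2)
        ≤ c ^ k * ∏ i, (s i - (if h : (i : ℕ) = 0 then 0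
            else s ⟨(i : ℕ) - 1, lt_of_le_of_lt (Nat.sub_le _ _) i.isLt⟩)) ^ (-(H * d)) := by
  refine ⟨kH ^ (-(d : ℝ)/2), Real.rpow_pos_of_pos hkH _, ?_⟩
  intro k s hsm hsp
  have hgoal : ∀ (i : Fin k), (if h : (i : ℕ) = 0 then (0:ℝ)
      else s ⟨(i : ℕ) - 1, lt_of_le_of_lt (Nat.sub_le _ _) i.isLt⟩) = prevv s i := fun i => rfl
  simp only [hgoal]
  have hΔ : ∀ i, 0 < s i - prevv s i := by
    intro i
    by_cases h : (i : ℕ) = 0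
    · simp only [prevv, dif_pos h]
      simpa using hsp i
    · simp only [prevv, dif_neg h]
      have hlt : (⟨(i : ℕ) - 1, lt_of_le_of_lt (Nat.sub_le _ _) i.isLt⟩ : Fin k) < i := by
        rw [Fin.lt_def]
        exact Nat.sub_lt (Nat.pos_of_ne_zero h) one_pos
      have := hsm hlt
      linarith
  set M : Matrix (Fin k × Fin d) (Fin k × Fin d) ℝ :=
    Matrix.of (fun p q : Fin k × Fin d => if p.2 = q.2 then R (s p.1) (s q.1) else 0) with hM
  set V : Matrix (Fin k) (Fin k) ℝ := Matrix.of (fun i j => if i ≤ j then (1:ℝ) else 0) with hV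
  set U : Matrix (Fin k × Fin d) (Fin k × Fin d) ℝ :=
    Matrix.of (fun p q : Fin k × Fin d => if p.2 = q.2 then V p.1 q.1 else 0) with hU
  set D : Matrix (Fin k × Fin d) (Fin k × Fin d) ℝ :=
    Matrix.diagonal (fun p : Fin k × Fin d => kH * (s p.1 - prevv s p.1) ^ (2*H)) with hD
  set N : Matrix (Fin k × Fin d) (Fin k × Fin d) ℝ := Uᵀ * D * U with hN
  have hDpd : D.PosDef := by
    rw [hD]
    exact Matrix.PosDef.diagonal fun p => mul_pos hkH (Real.rpow_pos_of_pos (hΔ p.1) _)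
  have hVdet : V.det = 1 := by
    have hVt : V.BlockTriangular id := by
      intro i j hij
      have hij' : j < i := hij
      rw [hV]
      simp only [Matrix.of_apply]
      rw [if_neg (not_le.mpr hij')]
    rw [Matrix.det_of_upperTriangular hVt]
    simp [hV]
  have hUK : U = Matrix.kroneckerMap (· * ·) V (1 : Matrix (Fin d) (Fin d) ℝ) := by
    rw [hU]
    ext p q
    simp only [Matrix.of_apply, Matrix.kroneckerMap_apply, Matrix.one_apply, mul_ite, mul_one,
      mul_zero]
  have hUdet : U.det = 1 := by
    rw [hUK, Matrix.det_kronecker, hVdet, Matrix.det_one, one_pow, one_pow, one_mul]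
  have hNpd : N.PosDef := by
    rw [hN]
    exact my_posdef_conj hDpd U (by rw [hUdet]; exact isUnit_one)
  have hNdet : N.det = ∏ i : Fin k, (kH * (s i - prevv s i) ^ (2*H)) ^ d := by
    rw [hN, Matrix.det_mul, Matrix.det_mul, Matrix.det_transpose, hUdet, hD,
      Matrix.det_diagonal, mul_one, one_mul]
    rw [Fintype.prod_prod_type]
    refine Finset.prod_congr rfl fun i _ => ?_
    simp [Finset.prod_const]
  have hMN : (M - N).PosSemidef := by
    have hRsymm : ∀ u v, R u v = R v u := by
      intro u v; rw [hR, hR, abs_sub_comm]; ring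
    have hMh : M.IsHermitian := by
      rw [hM]
      unfold Matrix.IsHermitian
      ext p q
      simp only [Matrix.conjTranspose_apply, Matrix.of_apply, star_trivial]
      by_cases h : p.2 = q.2
      · rw [if_pos h.symm, if_pos h, hRsymm]
      · rw [if_neg (fun hh => h hh.symm), if_neg h]
    refine Matrix.PosSemidef.of_dotProduct_mulVec_nonneg ?_ ?_
    · exact hMh.sub hNpd.1
    · intro x
      have hstar : star x = x := funext fun p => by simp
      set ξ : Fin k → EuclideanSpace ℝ (Fin d) := fun i => WithLp.toLp 2 (fun a => x (i, a)) with hξ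
      have hinner : ∀ i j : Fin k, (inner ℝ (ξ i) (ξ j) : ℝ) = ∑ a, x (i,a) * x (j,a) := by
        intro i j
        rw [PiLp.inner_apply]
        refine Finset.sum_congr rfl fun a _ => ?_
        simp [hξ, RCLike.inner_apply, mul_comm]
      have hMq : dotProduct x (M *ᵥ x)
          = ∑ i, ∑ j, (inner ℝ (ξ i) (ξ j) : ℝ) * R (s i) (s j) := by
        simp only [hinner, hM, dotProduct, Matrix.mulVec, Matrix.of_apply, Finset.mul_sum]
        rw [Fintype.sum_prod_type]
        simp only [Fintype.sum_prod_type, mul_ite, ite_mul, mul_zero, zero_mul,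
          Finset.sum_ite_eq, Finset.mem_univ, if_true]
        refine Finset.sum_congr rfl fun i _ => ?_
        rw [Finset.sum_comm]
        refine Finset.sum_congr rfl fun j _ => ?_
        rw [Finset.sum_mul]
        refine Finset.sum_congr rfl fun a _ => ?_
        ring
      have hUx : ∀ p : Fin k × Fin d, (U *ᵥ x) p
          = ∑ j ∈ Finset.univ.filter (fun j => p.1 ≤ j), x (j, p.2) := by
        intro p
        rw [hU, hV]
        simp only [Matrix.mulVec, dotProduct, Matrix.of_apply]
        rw [Fintype.sum_prod_type, Finset.sum_filter]
        refine Finset.sum_congr rfl fun j _ => ?_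
        simp [ite_mul, zero_mul, one_mul, Finset.sum_ite_eq]
      have happ : ∀ (F : Finset (Fin k)) (a : Fin d), (∑ j ∈ F, ξ j) a = ∑ j ∈ F, x (j, a) := by
        intro F a
        induction F using Finset.induction_on with
        | empty => rw [Finset.sum_empty, Finset.sum_empty]; rfl
        | @insert b F hnot ih =>
            rw [Finset.sum_insert hnot, Finset.sum_insert hnot, ← ih]
            rfl
      have hnorm : ∀ i : Fin k, (‖∑ j ∈ Finset.univ.filter (fun j => i ≤ j), ξ j‖ : ℝ) ^ 2
          = ∑ a, (∑ j ∈ Finset.univ.filter (fun j => i ≤ j), x (j, a)) ^ 2 := by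
        intro i
        rw [← real_inner_self_eq_norm_sq, PiLp.inner_apply]
        refine Finset.sum_congr rfl fun a _ => ?_
        simp only [RCLike.inner_apply, starRingEnd_apply, star_trivial, happ]
        ring
      have hNq : dotProduct x (N *ᵥ x)
          = kH * ∑ i, ‖∑ j ∈ Finset.univ.filter (fun j => i ≤ j), ξ j‖ ^ 2
              * (s i - prevv s i) ^ (2*H) := by
        rw [hN, ← Matrix.mulVec_mulVec, ← Matrix.mulVec_mulVec, Matrix.dotProduct_mulVec,
          Matrix.vecMul_transpose, hD]
        simp only [dotProduct, Matrix.mulVec_diagonal]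
        rw [Fintype.sum_prod_type, Finset.mul_sum]
        refine Finset.sum_congr rfl fun i _ => ?_
        simp only [hUx]
        rw [hnorm i, Finset.sum_mul, Finset.mul_sum]
        refine Finset.sum_congr rfl fun a _ => ?_
        ring
      have key := hLND k s hsm hsp ξ
      simp only [hgoal] at key
      rw [hstar, Matrix.sub_mulVec, dotProduct_sub, hMq, hNq]
      linarith
  have hdetle : N.det ≤ M.det := my_det_mono hNpd hMN
  have hNdetpos : 0 < N.det := hNpd.det_pos
  have step1 : M.det ^ (-(1:ℝ)/2) ≤ N.det ^ (-(1:ℝ)/2) :=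
    Real.rpow_le_rpow_of_nonpos hNdetpos hdetle (by norm_num)
  refine le_trans step1 (le_of_eq ?_)
  rw [hNdet]
  rw [← Real.finset_prod_rpow _ _
    (fun i _ => pow_nonneg (mul_pos hkH (Real.rpow_pos_of_pos (hΔ i) _)).le d) _]
  have hterm : ∀ i : Fin k, (((kH * (s i - prevv s i) ^ (2*H)) ^ d) : ℝ) ^ (-(1:ℝ)/2)
      = kH ^ (-(d:ℝ)/2) * (s i - prevv s i) ^ (-(H * (d:ℝ))) := by
    intro i
    have hb : (0:ℝ) < kH * (s i - prevv s i) ^ (2*H) :=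
      mul_pos hkH (Real.rpow_pos_of_pos (hΔ i) _)
    rw [← Real.rpow_natCast (kH * (s i - prevv s i) ^ (2*H)) d, ← Real.rpow_mul hb.le,
      Real.mul_rpow hkH.le (Real.rpow_nonneg (hΔ i).le _), ← Real.rpow_mul (hΔ i).le]
    rw [show 2*H*((d:ℝ)*(-(1:ℝ)/2)) = -(H*(d:ℝ)) from by ring,
      show ((d:ℝ) * (-(1:ℝ)/2)) = -(d:ℝ)/2 from by ring]
  rw [Finset.prod_congr rfl fun i _ => hterm i, Finset.prod_mul_distrib, Finset.prod_const,
    Finset.card_univ, Fintype.card_fin]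
end
end
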